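/- Let Φ : ℂⁿ → ℝ be a strictly plurisubharmonic quadratic form, let Ψ be the polarization of Φ, and assume (the fundamental estimate) that there exist C₀, c₀ > 0 with −C₀|z−w|² ≤ 2 Re Ψ(z, w̄) − Φ(z) − Φ(w) ≤ −c₀|z−w|² for all z, w ∈ ℂⁿ. Then for every s ∈ ℝ and every constant Ĉ ∈ ℂ, the operator Π u(z) = Ĉ ∫_{ℂⁿ} e^{2Ψ(z,w̄)} u(w) e^{-2Φ(w)} dL(w) is a bounded linear operator from L²_{Φ,s}(ℂⁿ) to L²_{Φ,s}(ℂⁿ), i.e., there exists M > 0 with ∫_{ℂⁿ} |Π u(z)|² ⟨z⟩^{2s} e^{-2Φ(z)} dL(z) ≤ M² ∫_{ℂⁿ} |u(w)|² ⟨w⟩^{2s} e^{-2Φ(w)} dL(w) for all u ∈ L²_{Φ,s}(ℂⁿ). -/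

import Mathlib

open Matrix MeasureTheory ENNReal

noncomputable section

/-- The squared Euclidean norm `|z|²` on `ℂⁿ`. -/
def eSq {n : ℕ} (z : Fin n → ℂ) : ℝ := ∑ i, Complex.normSq (z i)

/-- The Japanese bracket `⟨z⟩ = (1 + |z|²)^{1/2}`. -/
def jb {n : ℕ} (z : Fin n → ℂ) : ℝ := Real.sqrt (1 + eSq z)

/-- `Φ : ℂⁿ → ℝ` is a (real) quadratic form of the underlying real coordinates. -/
def IsRQuad {n : ℕ} (Φ : (Fin n → ℂ) → ℝ) : Prop :=
  ∃ B : (Fin n → ℂ) →ₗ[ℝ] (Fin n → ℂ) →ₗ[ℝ] ℝ, ∀ z, Φ z = B z z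

/-- `Φ : ℂⁿ → ℝ` is a strictly plurisubharmonic quadratic form.  For a quadratic form `Φ`,
the Levi form satisfies `(∂²_{z z̄}Φ) w ⋅ w̄ = (Φ(w) + Φ(i w))/2`, so positive definiteness of
the Levi matrix is equivalent to `Φ(w) + Φ(i·w) > 0` for all `w ≠ 0`. -/
def IsSPSH {n : ℕ} (Φ : (Fin n → ℂ) → ℝ) : Prop :=
  IsRQuad Φ ∧ ∀ z : Fin n → ℂ, z ≠ 0 → 0 < Φ z + Φ (Complex.I • z)

/-- The squared weighted norm `‖u‖_s² = ∫ |u(z)|² ⟨z⟩^{2s} e^{-2Φ(z)} L(dz)` (in `ℝ≥0∞`). -/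
def hnorm {n : ℕ} (Φ : (Fin n → ℂ) → ℝ) (s : ℝ) (u : (Fin n → ℂ) → ℂ) : ℝ≥0∞ :=
  ∫⁻ z : Fin n → ℂ, (‖u z‖₊ : ℝ≥0∞) ^ 2 * ENNReal.ofReal (jb z ^ (2 * s) * Real.exp (-2 * Φ z))

/-- A conic subset of `ℂⁿ`. -/
def IsConic {n : ℕ} (V : Set (Fin n → ℂ)) : Prop := ∀ z ∈ V, ∀ t : ℝ, 0 < t → t • z ∈ V

/-- The `1/2`-Gelfand–Shilov wavefront set of `u` relative to `Φ`: the complement in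
`ℂⁿ∖{0}` of the points having an open conic neighborhood in `ℂⁿ∖{0}` on which
`|u(z)| ≤ C e^{Φ(z) - c|z|²}`. -/
def wf {n : ℕ} (Φ : (Fin n → ℂ) → ℝ) (u : (Fin n → ℂ) → ℂ) : Set (Fin n → ℂ) :=
  {z₀ | z₀ ≠ 0 ∧ ¬ ∃ V : Set (Fin n → ℂ), IsOpen V ∧ IsConic V ∧ (0 : Fin n → ℂ) ∉ V ∧ z₀ ∈ V ∧
      ∃ C c : ℝ, 0 < C ∧ 0 < c ∧ ∀ z ∈ V, ‖u z‖ ≤ C * Real.exp (Φ z - c * eSq z)}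

/-- A holomorphic quadratic form on `ℂ^{2n} = ℂⁿ_z × ℂⁿ_θ`. -/
def IsCQuad2 {n : ℕ} (Ψ : (Fin n → ℂ) → (Fin n → ℂ) → ℂ) : Prop :=
  ∃ B : ((Fin n → ℂ) × (Fin n → ℂ)) →ₗ[ℂ] ((Fin n → ℂ) × (Fin n → ℂ)) →ₗ[ℂ] ℂ,
    ∀ z θ, Ψ z θ = B (z, θ) (z, θ)

/-- A real quadratic form on `ℂⁿ × ℂⁿ` viewed as a real vector space. -/
def IsRQuadPair {n : ℕ} (R : (Fin n → ℂ) → (Fin n → ℂ) → ℝ) : Prop :=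
  ∃ B : ((Fin n → ℂ) × (Fin n → ℂ)) →ₗ[ℝ] ((Fin n → ℂ) × (Fin n → ℂ)) →ₗ[ℝ] ℝ,
    ∀ z w, R z w = B (z, w) (z, w)

/-- The Bergman-form integral operator
`G u (z) = a ∫ e^{2Ψ(z, w̄)} u(w) e^{-2Φ(w)} L(dw)`. -/
def berg {n : ℕ} (a : ℂ) (Ψ : (Fin n → ℂ) → (Fin n → ℂ) → ℂ) (Φ : (Fin n → ℂ) → ℝ)
    (u : (Fin n → ℂ) → ℂ) (z : Fin n → ℂ) : ℂ :=
  a * ∫ w : Fin n → ℂ, Complex.exp (2 * Ψ z (star w)) * u w * (Real.exp (-2 * Φ w) : ℂ)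


namespace StmtAux

variable {n : ℕ}

lemma eSq_nonneg (z : Fin n → ℂ) : 0 ≤ eSq z :=
  Finset.sum_nonneg fun _ _ => Complex.normSq_nonneg _

lemma eSq_neg (z : Fin n → ℂ) : eSq (-z) = eSq z := by
  simp [eSq]

lemma continuous_eSq : Continuous (eSq (n := n)) :=
  continuous_finset_sum _ fun i _ => Complex.continuous_normSq.comp (continuous_apply i)

lemma eSq_add_le (x y : Fin n → ℂ) : eSq (x + y) ≤ 2 * eSq x + 2 * eSq y := by
  unfold eSq
  rw [Finset.mul_sum, Finset.mul_sum, ← Finset.sum_add_distrib]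
  refine Finset.sum_le_sum fun i _ => ?_
  have h1 : ‖x i + y i‖ ≤ ‖x i‖ + ‖y i‖ :=
    norm_add_le _ _
  have h2 := norm_nonneg (x i)
  have h3 := norm_nonneg (y i)
  simp only [Pi.add_apply, Complex.normSq_eq_norm_sq]
  have h4 : ‖x i + y i‖ ^ 2 ≤ (‖x i‖ + ‖y i‖) ^ 2 :=
    pow_le_pow_left₀ (norm_nonneg _) h1 2
  nlinarith [sq_nonneg (‖x i‖ - ‖y i‖)]

lemma one_add_eSq_pos (z : Fin n → ℂ) : (0:ℝ) < 1 + eSq z := by linarith [eSq_nonneg z]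

lemma jb_pos (z : Fin n → ℂ) : 0 < jb z := Real.sqrt_pos.2 (one_add_eSq_pos z)

lemma continuous_jb : Continuous (jb (n := n)) :=
  Real.continuous_sqrt.comp (continuous_const.add continuous_eSq)

lemma jb_neg (z : Fin n → ℂ) : jb (-z) = jb z := by simp [jb, eSq_neg]

lemma jb_sub_comm (z w : Fin n → ℂ) : jb (w - z) = jb (z - w) := by
  rw [show w - z = -(z - w) by abel, jb_neg]

lemma jb_peetre (z w : Fin n → ℂ) : jb z ≤ Real.sqrt 2 * jb w * jb (z - w) := by
  have h := eSq_add_le (z - w) w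
  rw [sub_add_cancel] at h
  have key : 1 + eSq z ≤ (2 * (1 + eSq (z - w))) * (1 + eSq w) := by
    nlinarith [eSq_nonneg w, eSq_nonneg (z - w)]
  calc jb z = Real.sqrt (1 + eSq z) := rfl
    _ ≤ Real.sqrt ((2 * (1 + eSq (z - w))) * (1 + eSq w)) := Real.sqrt_le_sqrt key
    _ = Real.sqrt 2 * jb w * jb (z - w) := by
        rw [Real.sqrt_mul (by nlinarith [eSq_nonneg (z - w)]), Real.sqrt_mul (by norm_num : (0:ℝ) ≤ 2)]
        unfold jb; ring

lemma peetre_aux {t : ℝ} (ht : 0 ≤ t) (z w : Fin n → ℂ) :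
    jb z ^ t * jb w ^ (-t) ≤ 2 ^ (t/2) * jb (z - w) ^ t := by
  have h1 : jb z ^ t ≤ (Real.sqrt 2 * jb w * jb (z - w)) ^ t :=
    Real.rpow_le_rpow (jb_pos z).le (jb_peetre z w) ht
  have h2 : (Real.sqrt 2 * jb w * jb (z - w)) ^ t
      = 2 ^ (t/2) * jb w ^ t * jb (z - w) ^ t := by
    rw [Real.mul_rpow (mul_nonneg (Real.sqrt_nonneg 2) (jb_pos w).le) (jb_pos _).le,
        Real.mul_rpow (Real.sqrt_nonneg 2) (jb_pos w).le]
    congr 2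
    rw [Real.sqrt_eq_rpow, ← Real.rpow_mul (by norm_num : (0:ℝ) ≤ 2), mul_comm, mul_one_div]
  calc jb z ^ t * jb w ^ (-t)
      ≤ (2 ^ (t/2) * jb w ^ t * jb (z - w) ^ t) * jb w ^ (-t) := by
        refine mul_le_mul_of_nonneg_right ?_ (Real.rpow_nonneg (jb_pos w).le _)
        rw [← h2]; exact h1
    _ = 2 ^ (t/2) * jb (z - w) ^ t * (jb w ^ t * jb w ^ (-t)) := by ring
    _ = 2 ^ (t/2) * jb (z - w) ^ t := by
        rw [← Real.rpow_add (jb_pos w)]; simp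

lemma peetre (s : ℝ) (z w : Fin n → ℂ) :
    jb z ^ s * jb w ^ (-s) ≤ 2 ^ (|s|/2) * jb (z - w) ^ |s| := by
  rcases le_or_gt 0 s with hs | hs
  · rw [abs_of_nonneg hs]; exact peetre_aux hs z w
  · rw [abs_of_neg hs]
    have h := peetre_aux (t := -s) (by linarith) w z
    rw [jb_sub_comm] at h
    calc jb z ^ s * jb w ^ (-s) = jb w ^ (-s) * jb z ^ (-(-s)) := by rw [neg_neg]; ring
      _ ≤ 2 ^ (-s/2) * jb (z - w) ^ (-s) := h

/-- `(1+t)^a e^{-bt}` is bounded on `t ≥ 0`. -/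
lemma exists_rpow_exp_bound (a b : ℝ) (hb : 0 < b) :
    ∃ C : ℝ, 0 < C ∧ ∀ t : ℝ, 0 ≤ t → (1 + t) ^ a * Real.exp (-b * t) ≤ C := by
  have h := tendsto_rpow_mul_exp_neg_mul_atTop_nhds_zero a b hb
  have h1 : ∀ᶠ x : ℝ in Filter.atTop, x ^ a * Real.exp (-b * x) < 1 :=
    h.eventually_lt_const one_pos
  obtain ⟨T, hT⟩ := Filter.eventually_atTop.1 h1
  have hcont : ContinuousOn (fun t : ℝ => (1 + t) ^ a * Real.exp (-b * t)) (Set.Icc 0 T) := by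
    apply ContinuousOn.mul
    · apply ContinuousOn.rpow_const (by fun_prop)
      intro x hx
      left
      have : (0:ℝ) ≤ x := hx.1
      positivity
    · fun_prop
  obtain ⟨C', hC'⟩ := (isCompact_Icc).exists_bound_of_continuousOn hcont
  refine ⟨max C' (Real.exp b) + 1, by positivity, fun t ht => ?_⟩
  rcases le_or_gt (1 + t) T with hcase | hcase
  · have hT0 : t ≤ T := by linarith
    have hb1 := hC' t ⟨ht, hT0⟩
    have h2 : (1 + t) ^ a * Real.exp (-b * t) ≤ C' :=
      (le_abs_self _).trans (by rwa [Real.norm_eq_abs] at hb1)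
    have : C' ≤ max C' (Real.exp b) := le_max_left _ _
    linarith
  · have key : (1 + t) ^ a * Real.exp (-b * (1 + t)) < 1 := hT _ hcase.le
    have hexp : Real.exp (-b * t) = Real.exp (-b * (1 + t)) * Real.exp b := by
      rw [← Real.exp_add]; ring_nf
    have h2 : (1 + t) ^ a * Real.exp (-b * t)
        = ((1 + t) ^ a * Real.exp (-b * (1 + t))) * Real.exp b := by rw [hexp]; ring
    have h3 : ((1 + t) ^ a * Real.exp (-b * (1 + t))) * Real.exp b ≤ 1 * Real.exp b :=
      mul_le_mul_of_nonneg_right key.le (Real.exp_nonneg b)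
    have h4 : Real.exp b ≤ max C' (Real.exp b) := le_max_right _ _
    rw [h2]; rw [one_mul] at h3; linarith

lemma integrable_gauss_complex {b : ℝ} (hb : 0 < b) :
    Integrable (fun z : ℂ => Real.exp (-b * Complex.normSq z)) := by
  have h2 : Integrable (fun p : ℝ × ℝ => Real.exp (-b * p.1 ^ 2) * Real.exp (-b * p.2 ^ 2)) := by
    rw [Measure.volume_eq_prod]
    exact (integrable_exp_neg_mul_sq hb).mul_prod (integrable_exp_neg_mul_sq hb)
  refine (((Complex.volume_preserving_equiv_real_prod.symm
      Complex.measurableEquivRealProd).integrable_comp_emb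
      (Complex.measurableEquivRealProd.symm.measurableEmbedding)).1 ?_)
  refine h2.congr (Filter.Eventually.of_forall fun p => ?_)
  show Real.exp (-b * p.1 ^ 2) * Real.exp (-b * p.2 ^ 2)
      = ((fun z : ℂ => Real.exp (-b * Complex.normSq z)) ∘ Complex.measurableEquivRealProd.symm) p
  simp only [Function.comp_apply, Complex.measurableEquivRealProd_symm_apply, Complex.normSq_mk]
  rw [← Real.exp_add]
  congr 1
  ring

lemma integrable_gauss_pi {b : ℝ} (hb : 0 < b) :
    Integrable (fun x : Fin n → ℂ => Real.exp (-b * eSq x)) := by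
  have heq : (fun x : Fin n → ℂ => Real.exp (-b * eSq x))
      = fun x => ∏ i, Real.exp (-b * Complex.normSq (x i)) := by
    funext x
    rw [eSq, Finset.mul_sum, ← Real.exp_sum]
  rw [heq]
  exact Integrable.fintype_prod fun _ => integrable_gauss_complex hb

/-- Finiteness of the Schur integral. -/
lemma kernel_lintegral_lt_top {c a : ℝ} (hc : 0 < c) (ha : 0 ≤ a) :
    ∫⁻ x : Fin n → ℂ, ENNReal.ofReal (jb x ^ a * Real.exp (-c * eSq x)) < ⊤ := by
  obtain ⟨C, hC, hbound⟩ := exists_rpow_exp_bound (a/2) (c/2) (by linarith)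
  have key : ∀ x : Fin n → ℂ,
      jb x ^ a * Real.exp (-c * eSq x) ≤ C * Real.exp (-(c/2) * eSq x) := by
    intro x
    have h1 : jb x ^ a = (1 + eSq x) ^ (a/2) := by
      rw [jb, Real.sqrt_eq_rpow, ← Real.rpow_mul (one_add_eSq_pos x).le, mul_comm, mul_one_div]
    have h2 : Real.exp (-c * eSq x) = Real.exp (-(c/2) * eSq x) * Real.exp (-(c/2) * eSq x) := by
      rw [← Real.exp_add]; ring_nf
    have h3 := hbound (eSq x) (eSq_nonneg x)
    have h4 : (0:ℝ) ≤ Real.exp (-(c/2) * eSq x) := (Real.exp_pos _).le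
    calc jb x ^ a * Real.exp (-c * eSq x)
        = ((1 + eSq x) ^ (a/2) * Real.exp (-(c/2) * eSq x)) * Real.exp (-(c/2) * eSq x) := by
          rw [h1, h2]; ring
      _ ≤ C * Real.exp (-(c/2) * eSq x) := mul_le_mul_of_nonneg_right h3 h4
  calc ∫⁻ x : Fin n → ℂ, ENNReal.ofReal (jb x ^ a * Real.exp (-c * eSq x))
      ≤ ∫⁻ x : Fin n → ℂ, ENNReal.ofReal (C * Real.exp (-(c/2) * eSq x)) :=
        lintegral_mono fun x => ENNReal.ofReal_le_ofReal (key x)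
    _ = ∫⁻ x : Fin n → ℂ, ENNReal.ofReal C * ENNReal.ofReal (Real.exp (-(c/2) * eSq x)) := by
        simp_rw [← ENNReal.ofReal_mul hC.le]
    _ = ENNReal.ofReal C * ∫⁻ x : Fin n → ℂ, ENNReal.ofReal (Real.exp (-(c/2) * eSq x)) :=
        lintegral_const_mul' _ _ ENNReal.ofReal_ne_top
    _ < ⊤ := ENNReal.mul_lt_top ENNReal.ofReal_lt_top
        (integrable_gauss_pi (by linarith)).lintegral_lt_top

lemma hnorm_eq (Φ : (Fin n → ℂ) → ℝ) (s : ℝ) (v : (Fin n → ℂ) → ℂ) :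
    hnorm Φ s v = ∫⁻ z, ((‖v z‖₊ : ℝ≥0∞) * ENNReal.ofReal (Real.exp (-Φ z) * jb z ^ s)) ^ 2 := by
  unfold hnorm
  refine lintegral_congr fun z => ?_
  rw [mul_pow]
  congr 1
  rw [← ENNReal.ofReal_pow (mul_nonneg (Real.exp_nonneg _) (Real.rpow_nonneg (jb_pos z).le s))]
  congr 1
  rw [mul_pow]
  have e1 : Real.exp (-Φ z) ^ 2 = Real.exp (-2 * Φ z) := by
    rw [sq, ← Real.exp_add]; ring_nf
  have e2 : (jb z ^ s) ^ 2 = jb z ^ (2 * s) := by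
    rw [← Real.rpow_natCast (jb z ^ s) 2, ← Real.rpow_mul (jb_pos z).le]
    norm_num [mul_comm]
  rw [e1, e2]; ring

lemma holder_step {k g : (Fin n → ℂ) → ℝ≥0∞} (hk : Measurable k) (hg : Measurable g)
    (z : Fin n → ℂ) :
    (∫⁻ w, k (z - w) * g w) ^ 2 ≤ (∫⁻ x, k x) * ∫⁻ w, k (z - w) * g w ^ 2 := by
  have hk' : Measurable fun w => k (z - w) := hk.comp (measurable_const.sub measurable_id)
  have h12 : Real.HolderConjugate 2 2 := Real.HolderConjugate.two_two
  have hf1 : AEMeasurable (fun w => k (z - w) ^ (1/2 : ℝ)) volume := (hk'.pow_const _).aemeasurable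
  have hf2 : AEMeasurable (fun w => k (z - w) ^ (1/2 : ℝ) * g w) volume :=
    ((hk'.pow_const _).mul hg).aemeasurable
  have key := ENNReal.lintegral_mul_le_Lp_mul_Lq volume h12 hf1 hf2
  have e1 : ∀ w, k (z - w) ^ (1/2:ℝ) * (k (z - w) ^ (1/2:ℝ) * g w) = k (z - w) * g w := by
    intro w
    rw [← mul_assoc,
      ← ENNReal.rpow_add_of_nonneg (x := k (z - w)) (1/2) (1/2) (by norm_num) (by norm_num)]
    norm_num
  have e2 : ∀ w, (k (z - w) ^ (1/2:ℝ)) ^ (2:ℝ) = k (z - w) := by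
    intro w; rw [← ENNReal.rpow_mul]; norm_num
  have e3 : ∀ w, (k (z - w) ^ (1/2:ℝ) * g w) ^ (2:ℝ) = k (z - w) * g w ^ 2 := by
    intro w
    rw [ENNReal.mul_rpow_of_nonneg _ _ (by norm_num : (0:ℝ) ≤ 2), e2 w]
    congr 1
    rw [← ENNReal.rpow_natCast (g w) 2]; norm_num
  have htrans : ∫⁻ w, k (z - w) = ∫⁻ x, k x :=
    (Measure.measurePreserving_sub_left volume z).lintegral_comp hk
  have key2 : ∫⁻ w, k (z - w) * g w
      ≤ (∫⁻ x, k x) ^ (1/2:ℝ) * (∫⁻ w, k (z - w) * g w ^ 2) ^ (1/2:ℝ) := by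
    calc ∫⁻ w, k (z - w) * g w
        = ∫⁻ w, (k (z - w) ^ (1/2:ℝ)) * (k (z - w) ^ (1/2:ℝ) * g w) :=
          lintegral_congr fun w => (e1 w).symm
      _ ≤ (∫⁻ w, (k (z - w) ^ (1/2:ℝ)) ^ (2:ℝ)) ^ (1/2:ℝ)
            * (∫⁻ w, (k (z - w) ^ (1/2:ℝ) * g w) ^ (2:ℝ)) ^ (1/2:ℝ) := key
      _ = (∫⁻ x, k x) ^ (1/2:ℝ) * (∫⁻ w, k (z - w) * g w ^ 2) ^ (1/2:ℝ) := by
          rw [lintegral_congr e2, lintegral_congr e3, htrans]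
  calc (∫⁻ w, k (z - w) * g w) ^ 2
      ≤ ((∫⁻ x, k x) ^ (1/2:ℝ) * (∫⁻ w, k (z - w) * g w ^ 2) ^ (1/2:ℝ)) ^ 2 := by gcongr
    _ = (∫⁻ x, k x) * ∫⁻ w, k (z - w) * g w ^ 2 := by
        rw [mul_pow, ← ENNReal.rpow_natCast ((∫⁻ x, k x) ^ (1/2:ℝ)) 2,
          ← ENNReal.rpow_natCast ((∫⁻ w, k (z - w) * g w ^ 2) ^ (1/2:ℝ)) 2,
          ← ENNReal.rpow_mul, ← ENNReal.rpow_mul]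
        norm_num

lemma fubini_step {k g : (Fin n → ℂ) → ℝ≥0∞} (hk : Measurable k) (hg : Measurable g)
    (hkfin : ∫⁻ x, k x ≠ ⊤) (hgfin : ∀ w, g w ≠ ⊤) :
    ∫⁻ z, ∫⁻ w, k (z - w) * g w ^ 2 = (∫⁻ x, k x) * ∫⁻ w, g w ^ 2 := by
  have hmeas : AEMeasurable (Function.uncurry fun z w : Fin n → ℂ => k (z - w) * g w ^ 2)
      ((volume : Measure (Fin n → ℂ)).prod volume) := by
    apply Measurable.aemeasurable
    exact (hk.comp (measurable_fst.sub measurable_snd)).mul ((hg.comp measurable_snd).pow_const 2)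
  rw [lintegral_lintegral_swap hmeas]
  have h1 : ∀ w : Fin n → ℂ, ∫⁻ z, k (z - w) * g w ^ 2 = (∫⁻ x, k x) * g w ^ 2 := by
    intro w
    rw [lintegral_mul_const' (g w ^ 2) _ (ENNReal.pow_ne_top (hgfin w)),
      lintegral_sub_right_eq_self k w]
  simp_rw [h1]
  rw [lintegral_const_mul' _ _ hkfin]

lemma keyR (Φ : (Fin n → ℂ) → ℝ) (s c₀ : ℝ) (z w : Fin n → ℂ) (r : ℝ)
    (hfr : 2 * r - Φ z - Φ w ≤ -c₀ * eSq (z - w)) :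
    Real.exp (2 * r - 2 * Φ w) * (Real.exp (-Φ z) * jb z ^ s)
      ≤ (2:ℝ) ^ (|s|/2) * (jb (z - w) ^ |s| * Real.exp (-c₀ * eSq (z - w)))
          * (Real.exp (-Φ w) * jb w ^ s) := by
  have e1 : Real.exp (2*r - 2*Φ w) * Real.exp (-Φ z)
      = Real.exp (2*r - Φ z - Φ w) * Real.exp (-Φ w) := by
    rw [← Real.exp_add, ← Real.exp_add]; ring_nf
  have e2 : Real.exp (2*r - Φ z - Φ w) ≤ Real.exp (-c₀ * eSq (z - w)) := Real.exp_le_exp.2 hfr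
  have e3 : jb z ^ s ≤ (2:ℝ)^(|s|/2) * jb (z-w) ^ |s| * jb w ^ s := by
    have hp := peetre s z w
    calc jb z ^ s = (jb z ^ s * jb w ^ (-s)) * jb w ^ s := by
          rw [mul_assoc, ← Real.rpow_add (jb_pos w)]; simp
      _ ≤ (2^(|s|/2) * jb (z-w) ^ |s|) * jb w ^ s :=
          mul_le_mul_of_nonneg_right hp (Real.rpow_nonneg (jb_pos w).le s)
      _ = (2:ℝ)^(|s|/2) * jb (z-w) ^ |s| * jb w ^ s := by ring
  have h4 : Real.exp (2*r - 2*Φ w) * (Real.exp (-Φ z) * jb z ^ s)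
      = (Real.exp (2*r - Φ z - Φ w) * jb z ^ s) * Real.exp (-Φ w) := by
    calc Real.exp (2*r - 2*Φ w) * (Real.exp (-Φ z) * jb z ^ s)
        = (Real.exp (2*r - 2*Φ w) * Real.exp (-Φ z)) * jb z ^ s := by ring
      _ = (Real.exp (2*r - Φ z - Φ w) * Real.exp (-Φ w)) * jb z ^ s := by rw [e1]
      _ = (Real.exp (2*r - Φ z - Φ w) * jb z ^ s) * Real.exp (-Φ w) := by ring
  rw [h4]
  have h5 : Real.exp (2*r - Φ z - Φ w) * jb z ^ s
      ≤ Real.exp (-c₀ * eSq (z-w)) * ((2:ℝ)^(|s|/2) * jb (z-w) ^ |s| * jb w ^ s) :=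
    mul_le_mul e2 e3 (Real.rpow_nonneg (jb_pos z).le s) (Real.exp_nonneg _)
  calc (Real.exp (2*r - Φ z - Φ w) * jb z ^ s) * Real.exp (-Φ w)
      ≤ (Real.exp (-c₀ * eSq (z-w)) * ((2:ℝ)^(|s|/2) * jb (z-w) ^ |s| * jb w ^ s))
          * Real.exp (-Φ w) := mul_le_mul_of_nonneg_right h5 (Real.exp_nonneg _)
    _ = (2:ℝ)^(|s|/2) * (jb (z-w) ^ |s| * Real.exp (-c₀ * eSq (z-w)))
          * (Real.exp (-Φ w) * jb w ^ s) := by ring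

end StmtAux

/-- Let `Φ` be a strictly plurisubharmonic quadratic form on `ℂⁿ`, `Ψ` its
polarization satisfying the fundamental estimate
`−C₀|z−w|² ≤ 2 Re Ψ(z,w̄) − Φ(z) − Φ(w) ≤ −c₀|z−w|²`.  Then for every `s ∈ ℝ` and `Ĉ ∈ ℂ`
the Bergman-type operator `Π u (z) = Ĉ ∫ e^{2Ψ(z,w̄)} u(w) e^{-2Φ(w)} dL(w)` is bounded on
`L²_{Φ,s}(ℂⁿ)`. -/
theorem stmt_4 (n : ℕ) (hn : 1 ≤ n) (Φ : (Fin n → ℂ) → ℝ) (hΦ : IsSPSH Φ)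
    (Ψ : (Fin n → ℂ) → (Fin n → ℂ) → ℂ) (hΨ : IsCQuad2 Ψ)
    (hpol : ∀ z : Fin n → ℂ, Ψ z (star z) = (Φ z : ℂ))
    (C₀ c₀ : ℝ) (hC₀ : 0 < C₀) (hc₀ : 0 < c₀)
    (hfund : ∀ z w : Fin n → ℂ,
        -C₀ * eSq (z - w) ≤ 2 * (Ψ z (star w)).re - Φ z - Φ w ∧
        2 * (Ψ z (star w)).re - Φ z - Φ w ≤ -c₀ * eSq (z - w))
    (s : ℝ) (Chat : ℂ) :
    ∃ M : ℝ, 0 < M ∧ ∀ u : (Fin n → ℂ) → ℂ, Measurable u → hnorm Φ s u < ⊤ →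
      hnorm Φ s (berg Chat Ψ Φ u) ≤ ENNReal.ofReal (M ^ 2) * hnorm Φ s u := by
  classical
  obtain ⟨Bq, hBq⟩ := hΦ.1
  have hΦcont : Continuous Φ := by
    let C : (Fin n → ℂ) →ₗ[ℝ] ((Fin n → ℂ) →L[ℝ] ℝ) :=
      (LinearMap.toContinuousLinearMap :
        ((Fin n → ℂ) →ₗ[ℝ] ℝ) ≃ₗ[ℝ] ((Fin n → ℂ) →L[ℝ] ℝ)).toLinearMap.comp Bq
    have hC : Continuous C := C.continuous_of_finiteDimensional
    have h2 : Continuous fun z : Fin n → ℂ => (C z) z :=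
      isBoundedBilinearMap_apply.continuous.comp (hC.prodMk continuous_id)
    have h3 : Φ = fun z => (C z) z := funext fun z => by
      simpa [C] using hBq z
    rw [h3]; exact h2
  set k : (Fin n → ℂ) → ℝ≥0∞ :=
    fun x => ENNReal.ofReal (jb x ^ |s| * Real.exp (-c₀ * eSq x)) with hkdef
  have hkmeas : Measurable k :=
    (((StmtAux.continuous_jb.rpow_const fun x => Or.inl (StmtAux.jb_pos x).ne').mul
      (Real.continuous_exp.comp (continuous_const.mul StmtAux.continuous_eSq))).measurable).ennreal_ofReal
  have hIlt : (∫⁻ x : Fin n → ℂ, k x) ≠ ⊤ :=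
    (StmtAux.kernel_lintegral_lt_top hc₀ (abs_nonneg s)).ne
  set E : (Fin n → ℂ) → ℝ≥0∞ :=
    fun z => ENNReal.ofReal (Real.exp (-Φ z) * jb z ^ s) with hEdef
  have hEmeas : Measurable E :=
    (((Real.continuous_exp.comp hΦcont.neg).mul
      (StmtAux.continuous_jb.rpow_const fun x => Or.inl (StmtAux.jb_pos x).ne')).measurable).ennreal_ofReal
  set P : ℝ≥0∞ := ENNReal.ofReal ((2:ℝ) ^ (|s|/2)) with hPdef
  set A : ℝ≥0∞ := (‖Chat‖₊ : ℝ≥0∞) with hAdef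
  set Btot : ℝ≥0∞ := (A * P * ∫⁻ x : Fin n → ℂ, k x) ^ 2 with hBtot
  have hBtop : Btot ≠ ⊤ :=
    ENNReal.pow_ne_top
      (ENNReal.mul_ne_top (ENNReal.mul_ne_top ENNReal.coe_ne_top ENNReal.ofReal_ne_top) hIlt)
  refine ⟨Real.sqrt Btot.toReal + 1, by positivity, fun u hu _ => ?_⟩
  set g : (Fin n → ℂ) → ℝ≥0∞ := fun w => (‖u w‖₊ : ℝ≥0∞) * E w with hgdef
  have hgmeas : Measurable g := (hu.nnnorm.coe_nnreal_ennreal).mul hEmeas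
  have hgfin : ∀ w, g w ≠ ⊤ := fun w =>
    ENNReal.mul_ne_top ENNReal.coe_ne_top ENNReal.ofReal_ne_top
  have step1 : ∀ z, (‖berg Chat Ψ Φ u z‖₊ : ℝ≥0∞) * E z ≤ A * P * ∫⁻ w, k (z - w) * g w := by
    intro z
    have base : (‖berg Chat Ψ Φ u z‖₊ : ℝ≥0∞) ≤ A * ∫⁻ w, ENNReal.ofReal
        (Real.exp (2 * (Ψ z (star w)).re - 2 * Φ w)) * (‖u w‖₊ : ℝ≥0∞) := by
      unfold berg
      rw [nnnorm_mul, ENNReal.coe_mul]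
      refine mul_le_mul_right ?_ A
      set f : (Fin n → ℂ) → ℂ :=
        fun w => Complex.exp (2 * Ψ z (star w)) * u w * (Real.exp (-2 * Φ w) : ℂ) with hfdef
      have hnf : ∀ w, ‖f w‖ = Real.exp (2 * (Ψ z (star w)).re - 2 * Φ w) * ‖u w‖ := by
        intro w
        rw [hfdef]
        simp only [norm_mul, Complex.norm_exp, Complex.norm_real, Real.norm_eq_abs]
        rw [abs_of_pos (Real.exp_pos _)]
        have hre : (2 * Ψ z (star w)).re = 2 * (Ψ z (star w)).re := by
          simp [Complex.mul_re]
        rw [hre, show (2:ℝ) * (Ψ z (star w)).re - 2 * Φ w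
            = 2 * (Ψ z (star w)).re + -(2 * Φ w) by ring, Real.exp_add,
          show -((2:ℝ) * Φ w) = -2 * Φ w by ring]
        ring
      calc (‖∫ w, f w‖₊ : ℝ≥0∞) = ENNReal.ofReal ‖∫ w, f w‖ := ((ofReal_norm _).trans (enorm_eq_nnnorm _)).symm
        _ ≤ ENNReal.ofReal (∫⁻ w, ENNReal.ofReal ‖f w‖).toReal :=
            ENNReal.ofReal_le_ofReal (norm_integral_le_lintegral_norm f)
        _ ≤ ∫⁻ w, ENNReal.ofReal ‖f w‖ := ENNReal.ofReal_toReal_le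
        _ = ∫⁻ w, ENNReal.ofReal (Real.exp (2 * (Ψ z (star w)).re - 2 * Φ w)) * (‖u w‖₊:ℝ≥0∞) := by
            refine lintegral_congr fun w => ?_
            rw [hnf w, ENNReal.ofReal_mul (Real.exp_pos _).le, ofReal_norm, enorm_eq_nnnorm]
    have hpt : ∀ w, (ENNReal.ofReal (Real.exp (2 * (Ψ z (star w)).re - 2 * Φ w))
        * (‖u w‖₊:ℝ≥0∞)) * E z ≤ P * (k (z - w) * g w) := by
      intro w
      have hreal := StmtAux.keyR Φ s c₀ z w ((Ψ z (star w)).re) (hfund z w).2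
      calc (ENNReal.ofReal (Real.exp (2 * (Ψ z (star w)).re - 2 * Φ w)) * (‖u w‖₊:ℝ≥0∞)) * E z
          = ENNReal.ofReal (Real.exp (2 * (Ψ z (star w)).re - 2 * Φ w)
              * (Real.exp (-Φ z) * jb z ^ s)) * (‖u w‖₊:ℝ≥0∞) := by
            simp only [hEdef]
            rw [mul_right_comm]
            congr 1
            exact (ENNReal.ofReal_mul (Real.exp_pos _).le).symm
        _ ≤ ENNReal.ofReal ((2:ℝ) ^ (|s|/2) * (jb (z - w) ^ |s| * Real.exp (-c₀ * eSq (z - w)))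
              * (Real.exp (-Φ w) * jb w ^ s)) * (‖u w‖₊:ℝ≥0∞) :=
            mul_le_mul_left (ENNReal.ofReal_le_ofReal hreal) _
        _ = P * (k (z - w) * g w) := by
            rw [ENNReal.ofReal_mul (mul_nonneg (Real.rpow_nonneg (by norm_num : (0:ℝ) ≤ 2) _)
                 (mul_nonneg (Real.rpow_nonneg (StmtAux.jb_pos _).le _) (Real.exp_pos _).le)),
               ENNReal.ofReal_mul (Real.rpow_nonneg (by norm_num : (0:ℝ) ≤ 2) _)]
            simp only [hkdef, hgdef, hEdef, hPdef]
            ring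
    calc (‖berg Chat Ψ Φ u z‖₊ : ℝ≥0∞) * E z
        ≤ (A * ∫⁻ w, ENNReal.ofReal (Real.exp (2 * (Ψ z (star w)).re - 2 * Φ w))
            * (‖u w‖₊:ℝ≥0∞)) * E z := mul_le_mul_left base _
      _ = A * ∫⁻ w, (ENNReal.ofReal (Real.exp (2 * (Ψ z (star w)).re - 2 * Φ w))
            * (‖u w‖₊:ℝ≥0∞)) * E z := by
          rw [mul_assoc, lintegral_mul_const' (E z) _ ENNReal.ofReal_ne_top]
      _ ≤ A * ∫⁻ w, P * (k (z - w) * g w) := mul_le_mul_right (lintegral_mono hpt) A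
      _ = A * (P * ∫⁻ w, k (z - w) * g w) := by
          rw [lintegral_const_mul' _ _ ENNReal.ofReal_ne_top]
      _ = A * P * ∫⁻ w, k (z - w) * g w := by rw [mul_assoc]
  have hBle : Btot ≤ ENNReal.ofReal ((Real.sqrt Btot.toReal + 1) ^ 2) := by
    conv_lhs => rw [← ENNReal.ofReal_toReal hBtop]
    apply ENNReal.ofReal_le_ofReal
    have h2 : Real.sqrt Btot.toReal ^ 2 = Btot.toReal := Real.sq_sqrt ENNReal.toReal_nonneg
    nlinarith [Real.sqrt_nonneg Btot.toReal]
  calc hnorm Φ s (berg Chat Ψ Φ u)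
      = ∫⁻ z, ((‖berg Chat Ψ Φ u z‖₊ : ℝ≥0∞) * E z) ^ 2 := StmtAux.hnorm_eq Φ s _
    _ ≤ ∫⁻ z, (A * P * ∫⁻ w, k (z - w) * g w) ^ 2 :=
        lintegral_mono fun z => pow_le_pow_left' (step1 z) 2
    _ = ∫⁻ z, (A * P) ^ 2 * (∫⁻ w, k (z - w) * g w) ^ 2 := by
        simp_rw [mul_pow]
    _ = (A * P) ^ 2 * ∫⁻ z, (∫⁻ w, k (z - w) * g w) ^ 2 :=
        lintegral_const_mul' _ _
          (ENNReal.pow_ne_top (ENNReal.mul_ne_top ENNReal.coe_ne_top ENNReal.ofReal_ne_top))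
    _ ≤ (A * P) ^ 2 * ∫⁻ z, (∫⁻ x : Fin n → ℂ, k x) * ∫⁻ w, k (z - w) * g w ^ 2 :=
        mul_le_mul_right (lintegral_mono fun z => StmtAux.holder_step hkmeas hgmeas z) _
    _ = (A * P) ^ 2 * ((∫⁻ x : Fin n → ℂ, k x) * ∫⁻ z, ∫⁻ w, k (z - w) * g w ^ 2) := by
        rw [lintegral_const_mul' _ _ hIlt]
    _ = (A * P) ^ 2 * ((∫⁻ x : Fin n → ℂ, k x)
          * ((∫⁻ x : Fin n → ℂ, k x) * ∫⁻ w, g w ^ 2)) := by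
        rw [StmtAux.fubini_step hkmeas hgmeas hIlt hgfin]
    _ = Btot * ∫⁻ w, g w ^ 2 := by rw [hBtot]; ring
    _ = Btot * hnorm Φ s u := by rw [StmtAux.hnorm_eq Φ s u]
    _ ≤ ENNReal.ofReal ((Real.sqrt Btot.toReal + 1) ^ 2) * hnorm Φ s u :=
        mul_le_mul_left hBle _
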